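/- Let A, B, C be a triangle, A₁ the point strictly between B and C with ∠BAA₁ = ∠A₁AC, B₁ the point strictly between A and C with ∠ABB₁ = ∠B₁BC, and J a point lying on both segment AA₁ and segment BB₁. If ∠ACB = π/3, then dist J A₁ = dist J B₁. -/

import Mathlib

open EuclideanGeometry Real

private abbrev Pt := EuclideanSpace ℝ (Fin 2)

private lemma my_law_sin_vec (u v : Pt) :
    Real.sin (InnerProductGeometry.angle u v) * (‖u‖ * ‖v‖) =
      Real.sin (InnerProductGeometry.angle (-u) (v - u)) * (‖-u‖ * ‖v - u‖) := by
  rw [InnerProductGeometry.sin_angle_mul_norm_mul_norm,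
    InnerProductGeometry.sin_angle_mul_norm_mul_norm]
  congr 1
  simp only [inner_sub_left, inner_sub_right, inner_neg_left, inner_neg_right,
    real_inner_comm v u]
  ring

private lemma my_law_sin (P Q R : Pt) :
    Real.sin (∠ Q P R) * (dist P Q * dist P R) =
      Real.sin (∠ P Q R) * (dist Q P * dist Q R) := by
  rw [EuclideanGeometry.angle, EuclideanGeometry.angle,
    dist_eq_norm_vsub' Pt P Q, dist_eq_norm_vsub' Pt P R,
    dist_eq_norm_vsub' Pt Q P, dist_eq_norm_vsub' Pt Q R,
    show P -ᵥ Q = -(Q -ᵥ P) from (neg_vsub_eq_vsub_rev Q P).symm,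
    show R -ᵥ Q = (R -ᵥ P) - (Q -ᵥ P) from (vsub_sub_vsub_cancel_right R Q P).symm]
  exact my_law_sin_vec _ _

private lemma my_ray (X Y Z Z' : Pt) (hw : Wbtw ℝ Y Z' Z) (hne : Z' ≠ Y) :
    ∠ X Y Z' = ∠ X Y Z := by
  obtain ⟨t, ht, rfl⟩ := hw
  have h0 : t ≠ 0 := by
    rintro rfl
    simp at hne
  have hpos : 0 < t := lt_of_le_of_ne ht.1 (Ne.symm h0)
  rw [EuclideanGeometry.angle, EuclideanGeometry.angle,
    show (AffineMap.lineMap Y Z) t -ᵥ Y = t • (Z -ᵥ Y) by simp [AffineMap.lineMap_apply],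
    InnerProductGeometry.angle_smul_right_of_pos _ _ hpos]

private lemma my_line_mono {X Y U V : Pt} (hX : X ∈ line[ℝ, U, V]) (hY : Y ∈ line[ℝ, U, V]) :
    line[ℝ, X, Y] ≤ line[ℝ, U, V] :=
  affineSpan_le.2 (Set.insert_subset_iff.2 ⟨hX, Set.singleton_subset_iff.2 hY⟩)

theorem stmt_8 (A B C A₁ B₁ J : EuclideanSpace ℝ (Fin 2))
    (hABC : ¬ Collinear ℝ ({A, B, C} : Set (EuclideanSpace ℝ (Fin 2))))
    (hA₁ : Sbtw ℝ B A₁ C) (hA₁' : ∠ B A A₁ = ∠ A₁ A C)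
    (hB₁ : Sbtw ℝ A B₁ C) (hB₁' : ∠ A B B₁ = ∠ B₁ B C)
    (hJA : J ∈ segment ℝ A A₁) (hJB : J ∈ segment ℝ B B₁)
    (h : ∠ A C B = π / 3) :
    dist J A₁ = dist J B₁ := by
  have nAB : A ≠ B := ne₁₂_of_not_collinear hABC
  have nAC : A ≠ C := ne₁₃_of_not_collinear hABC
  have nBC : B ≠ C := ne₂₃_of_not_collinear hABC
  have nA₁B : A₁ ≠ B := hA₁.ne_left
  have nA₁C : A₁ ≠ C := hA₁.ne_right
  have nB₁A : B₁ ≠ A := hB₁.ne_left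
  have nB₁C : B₁ ≠ C := hB₁.ne_right
  have hA₁line : A₁ ∈ line[ℝ, B, C] := hA₁.wbtw.mem_affineSpan
  have hB₁line : B₁ ∈ line[ℝ, A, C] := hB₁.wbtw.mem_affineSpan
  have hBnot : B ∉ line[ℝ, A, C] := by
    intro hB
    have hc := collinear_insert_of_mem_affineSpan_pair hB
    rw [Set.insert_comm] at hc
    exact hABC hc
  have hAnot : A ∉ line[ℝ, B, C] := fun hA =>
    hABC (collinear_insert_of_mem_affineSpan_pair hA)
  have nA₁A : A₁ ≠ A := fun he => hAnot (he ▸ hA₁line)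
  have nB₁B : B₁ ≠ B := fun he => hBnot (he ▸ hB₁line)
  have wJA : Wbtw ℝ A J A₁ := mem_segment_iff_wbtw.1 hJA
  have wJB : Wbtw ℝ B J B₁ := mem_segment_iff_wbtw.1 hJB
  have nJA : J ≠ A := by
    intro he; rw [he] at wJB
    exact hBnot (my_line_mono hB₁line (left_mem_affineSpan_pair ℝ A C)
      (wJB.left_mem_affineSpan_of_right_ne nB₁A))
  have nJB : J ≠ B := by
    intro he; rw [he] at wJA
    have h1 : Collinear ℝ {B, A, A₁} := collinear_insert_of_mem_affineSpan_pair wJA.mem_affineSpan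
    have hAmem : A ∈ line[ℝ, B, A₁] :=
      h1.mem_affineSpan_of_mem_of_ne (by simp) (by simp) (by simp) nA₁B.symm
    exact hAnot (my_line_mono (left_mem_affineSpan_pair ℝ B C) hA₁line hAmem)
  have nJA₁ : J ≠ A₁ := by
    intro he; rw [he] at wJB
    have hB₁mem : B₁ ∈ line[ℝ, B, A₁] := wJB.right_mem_affineSpan_of_left_ne nA₁B.symm
    have hB₁mem' : B₁ ∈ line[ℝ, B, C] :=
      my_line_mono (left_mem_affineSpan_pair ℝ B C) hA₁line hB₁mem
    have h1 : Collinear ℝ {B₁, B, C} := collinear_insert_of_mem_affineSpan_pair hB₁mem'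
    have hBmem : B ∈ line[ℝ, B₁, C] :=
      h1.mem_affineSpan_of_mem_of_ne (by simp) (by simp) (by simp) nB₁C
    exact hBnot (my_line_mono hB₁line (right_mem_affineSpan_pair ℝ A C) hBmem)
  have nJB₁ : J ≠ B₁ := by
    intro he; rw [he] at wJA
    have hA₁mem : A₁ ∈ line[ℝ, A, B₁] := wJA.right_mem_affineSpan_of_left_ne nB₁A.symm
    have hA₁mem' : A₁ ∈ line[ℝ, A, C] :=
      my_line_mono (left_mem_affineSpan_pair ℝ A C) hB₁line hA₁mem
    have h1 : Collinear ℝ {A₁, B, C} := collinear_insert_of_mem_affineSpan_pair hA₁line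
    have hBmem : B ∈ line[ℝ, A₁, C] :=
      h1.mem_affineSpan_of_mem_of_ne (by simp) (by simp) (by simp) nA₁C
    exact hBnot (my_line_mono hA₁mem' (right_mem_affineSpan_pair ℝ A C) hBmem)
  -- ray equalities
  have r1 : ∠ B A J = ∠ B A A₁ := my_ray B A A₁ J wJA nJA
  have r2 : ∠ A B J = ∠ A B B₁ := my_ray A B B₁ J wJB nJB
  have r3 : ∠ A B A₁ = ∠ A B C := my_ray A B C A₁ hA₁.wbtw nA₁B
  have r4 : ∠ A₁ A B₁ = ∠ A₁ A C := my_ray A₁ A C B₁ hB₁.wbtw nB₁A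
  have r5 : ∠ A C A₁ = ∠ A C B := my_ray A C B A₁ hA₁.symm.wbtw nA₁C
  have r6 : ∠ B C B₁ = ∠ B C A := my_ray B C A B₁ hB₁.symm.wbtw nB₁C
  have r7 : ∠ B A B₁ = ∠ B A C := my_ray B A C B₁ hB₁.wbtw nB₁A
  have r8 : ∠ B A₁ J = ∠ B A₁ A := my_ray B A₁ A J wJA.symm nJA₁
  have r9 : ∠ A B₁ J = ∠ A B₁ B := my_ray A B₁ B J wJB.symm nJB₁
  have r10 : ∠ B₁ B A₁ = ∠ B₁ B C := my_ray B₁ B C A₁ hA₁.wbtw nA₁B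
  have r11 : ∠ A₁ B J = ∠ A₁ B B₁ := my_ray A₁ B B₁ J wJB nJB
  have r12 : ∠ B₁ A J = ∠ B₁ A A₁ := my_ray B₁ A A₁ J wJA nJA
  -- linear pairs
  have p1 : ∠ A A₁ B + ∠ A A₁ C = π :=
    angle_add_angle_eq_pi_of_angle_eq_pi A hA₁.angle₁₂₃_eq_pi
  have p2 : ∠ B B₁ A + ∠ B B₁ C = π :=
    angle_add_angle_eq_pi_of_angle_eq_pi B hB₁.angle₁₂₃_eq_pi
  -- triangle angle sums
  have S1 : ∠ A B A₁ + ∠ B A₁ A + ∠ A₁ A B = π := angle_add_angle_add_angle_eq_pi A₁ nAB.symm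
  have S2 : ∠ A A₁ C + ∠ A₁ C A + ∠ C A A₁ = π := angle_add_angle_add_angle_eq_pi C nA₁A
  have S3 : ∠ A B B₁ + ∠ B B₁ A + ∠ B₁ A B = π := angle_add_angle_add_angle_eq_pi B₁ nAB.symm
  have S4 : ∠ B B₁ C + ∠ B₁ C B + ∠ C B B₁ = π := angle_add_angle_add_angle_eq_pi C nB₁B
  have S5 : ∠ A B C + ∠ B C A + ∠ C A B = π := angle_add_angle_add_angle_eq_pi C nAB.symm
  -- commutations
  have c1 : ∠ A₁ C A = ∠ A C A₁ := angle_comm _ _ _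
  have c2 : ∠ C A A₁ = ∠ A₁ A C := angle_comm _ _ _
  have c3 : ∠ B A₁ A = ∠ A A₁ B := angle_comm _ _ _
  have c4 : ∠ A₁ A B = ∠ B A A₁ := angle_comm _ _ _
  have c5 : ∠ B₁ C B = ∠ B C B₁ := angle_comm _ _ _
  have c6 : ∠ C B B₁ = ∠ B₁ B C := angle_comm _ _ _
  have c7 : ∠ B₁ A B = ∠ B A B₁ := angle_comm _ _ _
  have c8 : ∠ B C A = ∠ A C B := angle_comm _ _ _
  have c9 : ∠ C A B = ∠ B A C := angle_comm _ _ _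
  have c10 : ∠ A₁ B B₁ = ∠ B₁ B A₁ := angle_comm _ _ _
  have c11 : ∠ A B₁ B = ∠ B B₁ A := angle_comm _ _ _
  have hx : ∠ A A₁ B = ∠ A C B + ∠ B A A₁ := by linarith [S2, p1, c1, c2, r5, hA₁']
  have hy : ∠ B B₁ A = ∠ A C B + ∠ A B B₁ := by linarith [S4, p2, c5, c6, r6, c8, hB₁']
  have hαβ : ∠ B A A₁ + ∠ A B B₁ = π / 3 := by
    linarith [S1, S3, S5, r3, c3, hx, c4, hy, c7, r7, c8, c9, h]
  -- law of sines
  have dA₁B : dist A₁ B ≠ 0 := dist_ne_zero.2 nA₁B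
  have dB₁A : dist B₁ A ≠ 0 := dist_ne_zero.2 nB₁A
  have dAB : dist A B ≠ 0 := dist_ne_zero.2 nAB
  have E1 := my_law_sin A₁ B J
  have E2 := my_law_sin B₁ A J
  have E3 := my_law_sin A B J
  rw [dist_comm B A₁] at E1
  rw [dist_comm A B₁] at E2
  rw [dist_comm B A] at E3
  have e1 : Real.sin (∠ B A₁ J) * dist A₁ J = Real.sin (∠ A₁ B J) * dist B J :=
    mul_left_cancel₀ dA₁B (by linear_combination E1)
  have e2 : Real.sin (∠ A B₁ J) * dist B₁ J = Real.sin (∠ B₁ A J) * dist A J :=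
    mul_left_cancel₀ dB₁A (by linear_combination E2)
  have e3 : Real.sin (∠ B A J) * dist A J = Real.sin (∠ A B J) * dist B J :=
    mul_left_cancel₀ dAB (by linear_combination E3)
  have a1 : ∠ B A₁ J = ∠ A C B + ∠ B A A₁ := by rw [r8, angle_comm B A₁ A]; exact hx
  have a2 : ∠ A₁ B J = ∠ A B B₁ := by rw [r11, c10, r10]; exact hB₁'.symm
  have a3 : ∠ A B₁ J = ∠ A C B + ∠ A B B₁ := by rw [r9, c11]; exact hy
  have a4 : ∠ B₁ A J = ∠ B A A₁ := by rw [r12, angle_comm B₁ A A₁, r4]; exact hA₁'.symm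
  rw [a1, a2] at e1
  rw [a3, a4] at e2
  rw [r1, r2] at e3
  have hsin : Real.sin (∠ A C B + ∠ A B B₁) = Real.sin (∠ A C B + ∠ B A A₁) := by
    rw [show ∠ A C B + ∠ A B B₁ = π - (∠ A C B + ∠ B A A₁) by linarith [hαβ, h],
      Real.sin_pi_sub]
  have hpos : 0 < Real.sin (∠ A C B + ∠ B A A₁) := by
    apply Real.sin_pos_of_pos_of_lt_pi
    · have := angle_nonneg B A A₁
      linarith [Real.pi_pos]
    · have := angle_nonneg A B B₁
      linarith [Real.pi_pos]
  rw [hsin] at e2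
  rw [dist_comm J A₁, dist_comm J B₁]
  apply mul_left_cancel₀ hpos.ne'
  rw [e1, e2, e3]
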